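/- Let X be a real Banach space, let f : X → ℝ be quasiconvex, and let m ∈ ℝ be the topological essential infimum of f. If x ∈ X satisfies f(x) < m, then f is not Gâteaux differentiable at x. -/

import Mathlib

open Filter Topology Set MeasureTheory

/-- `f` is quasiconvex: `f (l•x + (1-l)•y) ≤ max (f x) (f y)` for `l ∈ [0,1]`. -/
def QuasiconvexFun {X : Type*} [AddCommGroup X] [Module ℝ X] (f : X → ℝ) : Prop :=
  ∀ x y : X, ∀ l : ℝ, l ∈ Set.Icc (0 : ℝ) 1 →
    f (l • x + (1 - l) • y) ≤ max (f x) (f y)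

/-- `f` is strictly quasiconvex. -/
def StrictlyQuasiconvexFun {X : Type*} [AddCommGroup X] [Module ℝ X] (f : X → ℝ) : Prop :=
  ∀ x y : X, x ≠ y → ∀ l : ℝ, l ∈ Set.Ioo (0 : ℝ) 1 →
    f (l • x + (1 - l) • y) < max (f x) (f y)

/-- `f` is densely continuous: its set of points of continuity is dense. -/
def DenselyContinuous {X : Type*} [TopologicalSpace X] (f : X → ℝ) : Prop :=
  Dense {x : X | ContinuousAt f x}

/-- `m` is the topological essential infimum of `f`: the strict sublevel set `{f < α}`
is meager for `α < m` and nonmeager for `α > m`. -/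
def IsTopEssInf {X : Type*} [TopologicalSpace X] (f : X → ℝ) (m : ℝ) : Prop :=
  (∀ α : ℝ, α < m → IsMeagre {x : X | f x < α}) ∧
  (∀ α : ℝ, m < α → ¬ IsMeagre {x : X | f x < α})

/-- Aronszajn null set: a Borel set `N` such that for every sequence `ξ` with dense linear
span, `N` decomposes as a countable union of Borel sets, the `n`-th of which has Lebesgue
null intersection with every line of direction `ξ n`. -/
def AronszajnNull {X : Type*} [NormedAddCommGroup X] [NormedSpace ℝ X]
    [MeasurableSpace X] (N : Set X) : Prop :=
  MeasurableSet N ∧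
  ∀ ξ : ℕ → X, Dense (Submodule.span ℝ (Set.range ξ) : Set X) →
    ∃ Nn : ℕ → Set X, N = ⋃ n, Nn n ∧
      ∀ n, MeasurableSet (Nn n) ∧
        ∀ x : X, MeasureTheory.volume {t : ℝ | x + t • ξ n ∈ Nn n} = 0

/-- Haar null set: `E` is contained in a Borel set `B` for which there is a Borel
probability measure vanishing on all translates of `B`. -/
def HaarNull {X : Type*} [AddCommGroup X] [TopologicalSpace X]
    [MeasurableSpace X] (E : Set X) : Prop :=
  ∃ B : Set X, E ⊆ B ∧ MeasurableSet B ∧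
    ∃ μ : MeasureTheory.Measure X, MeasureTheory.IsProbabilityMeasure μ ∧
      ∀ x : X, μ ((fun y => x + y) '' B) = 0

/-- Hadamard differentiability of `f` at `x`. -/
def HadamardDiffAt {X : Type*} [NormedAddCommGroup X] [NormedSpace ℝ X]
    (f : X → ℝ) (x : X) : Prop :=
  ∃ L : X →L[ℝ] ℝ, ∀ h : X, ∀ t : ℕ → ℝ, (∀ n, t n ≠ 0) →
    Tendsto t atTop (𝓝 0) → ∀ hs : ℕ → X, Tendsto hs atTop (𝓝 h) →
      Tendsto (fun n => (f (x + t n • hs n) - f x) / t n) atTop (𝓝 (L h))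

/-- Hadamard differentiability at `x` of a function whose relevant values are those on `V`. -/
def HadamardDiffWithinAt {X : Type*} [NormedAddCommGroup X] [NormedSpace ℝ X]
    (f : X → ℝ) (V : Set X) (x : X) : Prop :=
  ∃ L : X →L[ℝ] ℝ, ∀ h : X, ∀ t : ℕ → ℝ, (∀ n, t n ≠ 0) →
    Tendsto t atTop (𝓝 0) → ∀ hs : ℕ → X, Tendsto hs atTop (𝓝 h) →
      (∀ n, x + t n • hs n ∈ V) →
      Tendsto (fun n => (f (x + t n • hs n) - f x) / t n) atTop (𝓝 (L h))

/-- Gâteaux differentiability of `f` at `x` with derivative `L`. -/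
def GateauxDiffAt {X : Type*} [NormedAddCommGroup X] [NormedSpace ℝ X]
    (f : X → ℝ) (x : X) (L : X →L[ℝ] ℝ) : Prop :=
  ∀ h : X, Tendsto (fun t : ℝ => (f (x + t • h) - f x) / t) (𝓝[≠] 0) (𝓝 (L h))

/-- Essential Gâteaux differentiability of `f` at `x`: directional derivatives exist and
are given by a continuous linear functional for a comeager (residual) set of directions
in the unit sphere. -/
def EssGateauxDiffAt {X : Type*} [NormedAddCommGroup X] [NormedSpace ℝ X]
    (f : X → ℝ) (x : X) : Prop :=
  ∃ L : X →L[ℝ] ℝ, ∃ Ω : Set (Metric.sphere (0 : X) 1), IsMeagre Ωᶜ ∧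
    ∀ h ∈ Ω, Tendsto (fun t : ℝ => (f (x + t • (h : X)) - f x) / t) (𝓝[≠] 0) (𝓝 (L (h : X)))

/-- `K` is a closed convex cone. -/
def IsClosedConvexCone {X : Type*} [NormedAddCommGroup X] [NormedSpace ℝ X] (K : Set X) : Prop :=
  IsClosed K ∧ Convex ℝ K ∧ ∀ l : ℝ, 0 ≤ l → ∀ k ∈ K, l • k ∈ K

/-- `f` is `K`-nondecreasing on `U`. -/
def KNondecreasingOn {X : Type*} [AddCommGroup X] [Module ℝ X]
    (f : X → ℝ) (K U : Set X) : Prop :=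
  ∀ u ∈ U, ∀ k ∈ K, k ≠ 0 → u + k ∈ U → f u ≤ f (u + k)

/-- Ideally convex subset: stable under infinite convex combinations of bounded sequences. -/
def IdeallyConvex {X : Type*} [NormedAddCommGroup X] [NormedSpace ℝ X] (C : Set X) : Prop :=
  ∀ (x : ℕ → X) (lam : ℕ → ℝ), (∀ n, x n ∈ C) → Bornology.IsBounded (Set.range x) →
    (∀ n, lam n ∈ Set.Icc (0 : ℝ) 1) → HasSum lam 1 →
      ∑' n, lam n • x n ∈ C

/-- `C‡`: the union, over finite dimensional subspaces `Z ⊆ X`, of the closures of `C ∩ Z`. -/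
def Ddag {X : Type*} [NormedAddCommGroup X] [NormedSpace ℝ X] (C : Set X) : Set X :=
  ⋃ (Z : Submodule ℝ X) (_ : FiniteDimensional ℝ Z), closure (C ∩ (Z : Set X))

/-- A normed space is reflexive if the canonical inclusion into its double dual is onto. -/
def IsReflexiveSpace (X : Type*) [NormedAddCommGroup X] [NormedSpace ℝ X] : Prop :=
  Function.Surjective (NormedSpace.inclusionInDoubleDual ℝ X)

/-- A quasiconvex function on a Banach space is not Gâteaux differentiable at any point
below its topological essential infimum. -/
theorem stmt_11 {X : Type*} [NormedAddCommGroup X] [NormedSpace ℝ X] [CompleteSpace X]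
    (f : X → ℝ) (hq : QuasiconvexFun f) (m : ℝ) (hm : IsTopEssInf f m)
    (x : X) (hx : f x < m) :
    ¬ ∃ L : X →L[ℝ] ℝ, GateauxDiffAt f x L := by
  rintro ⟨L, hL⟩
  set α : ℝ := (f x + m) / 2 with hα
  have hxα : f x < α := by simp [hα]; linarith
  have hαm : α < m := by simp [hα]; linarith
  have hmeag : IsMeagre {y : X | f y < α} := hm.1 α hαm
  -- For each h, there is t > 0 with f (x + t • h) < α
  have key : ∀ h : X, ∃ t : ℝ, 0 < t ∧ f (x + t • h) < α := by
    intro h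
    have h1 := hL h
    have h2 : Tendsto (fun t : ℝ => f (x + t • h) - f x) (𝓝[≠] 0) (𝓝 0) := by
      have h2' := h1.mul ((tendsto_id (α := ℝ)).mono_left nhdsWithin_le_nhds)
      rw [mul_zero] at h2'
      refine h2'.congr' ?_
      filter_upwards [self_mem_nhdsWithin] with t (ht : t ≠ 0)
      exact div_mul_cancel₀ _ ht
    have h3 : Tendsto (fun t : ℝ => f (x + t • h)) (𝓝[≠] 0) (𝓝 (f x)) := by
      have := h2.add_const (f x); simpa using this
    have h4 : ∀ᶠ t in 𝓝[≠] (0:ℝ), f (x + t • h) < α :=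
      h3.eventually (Filter.Tendsto.eventually_lt_const hxα tendsto_id)
    have h5 : ∀ᶠ t in 𝓝[>] (0:ℝ), f (x + t • h) < α :=
      h4.filter_mono (nhdsWithin_mono _ (fun t (ht : 0 < t) => ne_of_gt ht))
    rcases (h5.and self_mem_nhdsWithin).exists with ⟨t, ht1, ht2⟩
    exact ⟨t, ht2, ht1⟩
  -- the sets A n
  set A : ℕ → Set X := fun n => {w : X | f (x + ((n:ℝ)+1)⁻¹ • w) < α} with hA
  have hAmeag : ∀ n, IsMeagre (A n) := by
    intro n
    have hne : ((n:ℝ)+1)⁻¹ ≠ 0 := by positivity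
    have hopen : IsOpenMap (fun w : X => x + ((n:ℝ)+1)⁻¹ • w) :=
      (Homeomorph.addLeft x).isOpenMap.comp
        (Homeomorph.smulOfNeZero (((n:ℝ)+1)⁻¹) hne).isOpenMap
    have hcont : Continuous (fun w : X => x + ((n:ℝ)+1)⁻¹ • w) := continuous_const.add (continuous_const_smul _)
    have : A n = (fun w : X => x + ((n:ℝ)+1)⁻¹ • w) ⁻¹' {y : X | f y < α} := rfl
    rw [this]
    exact hmeag.preimage_of_isOpenMap hcont hopen
  have hcover : (Set.univ : Set X) ⊆ ⋃ n, A n := by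
    intro h _
    rcases key h with ⟨t, ht0, htα⟩
    rcases exists_nat_gt t⁻¹ with ⟨n, hn⟩
    refine Set.mem_iUnion.2 ⟨n, ?_⟩
    set l : ℝ := (((n:ℝ)+1) * t)⁻¹ with hl
    have hnt : 1 ≤ ((n:ℝ)+1) * t := by
      rw [← div_le_iff₀ ht0] at *
      have : t⁻¹ ≤ (n:ℝ) + 1 := le_of_lt (lt_of_lt_of_le hn (by linarith))
      calc (1:ℝ)/t = t⁻¹ := one_div t
        _ ≤ (n:ℝ)+1 := this
    have hl0 : 0 < l := by
      rw [hl]; positivity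
    have hl1 : l ≤ 1 := by
      rw [hl]; exact inv_le_one_of_one_le₀ hnt
    have hqc := hq (x + t • h) x l ⟨le_of_lt hl0, hl1⟩
    have heq : l • (x + t • h) + (1 - l) • x = x + ((n:ℝ)+1)⁻¹ • h := by
      have hne : ((n:ℝ)+1) * t ≠ 0 := by positivity
      have : l * t = ((n:ℝ)+1)⁻¹ := by
        field_simp [hl]
        rw [hl]; linear_combination inv_mul_cancel₀ hne
      rw [smul_add, smul_smul, this]
      module
    rw [heq] at hqc
    have : f (x + ((n:ℝ)+1)⁻¹ • h) < α := lt_of_le_of_lt hqc (max_lt htα hxα)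
    exact this
  have : IsMeagre (Set.univ : Set X) :=
    (isMeagre_iUnion hAmeag).mono hcover
  have hdense : Dense ((Set.univ : Set X)ᶜ) := dense_of_mem_residual this
  rcases hdense.nonempty with ⟨y, hy⟩
  simp at hy
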